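/- Let q > 2 be prime and let C' ⊆ (ℤ/qℤ)^m be a k-dimensional linear subspace that is single-error-correcting for the channel ℛ_q. Then (i) the concatenated code C = {z ∈ (ℤ/qℤ)^{2m} : (z_{2j} − z_{2j−1})_{j=1,…,m} ∈ C'} is a linear subspace of (ℤ/qℤ)^{2m} of dimension m+k which, identifying ℤ/qℤ with {0,…,q−1} ⊆ ℤ, is a 1-code of length 2m (Δ ≥ 2 between distinct codewords); and (ii) the code C̃ = {z ∈ (ℤ/qℤ)^{2m−1} : (z_1, (z_{2j+1} − z_{2j})_{j=1,…,m−1}) ∈ C'} is a linear subspace of dimension m+k−1 which is a 1-code of length 2m−1. -/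
import Mathlib


/-- `N(x,y) = Σᵢ max(yᵢ - xᵢ, 0)`, identifying `ℤ_q` with `{0,…,q-1} ⊆ ℤ` via `ZMod.val`. -/
def NasymZ {n q : ℕ} (x y : Fin n → ZMod q) : ℤ :=
  ∑ i, max (((y i).val : ℤ) - ((x i).val : ℤ)) 0

/-- The asymmetric distance `Δ(x,y) = max(N(x,y), N(y,x))`. -/
def DasymZ {n q : ℕ} (x y : Fin n → ZMod q) : ℤ :=
  max (NasymZ x y) (NasymZ y x)

/-- The `ℛ_q`-ball of `c ∈ ℤ_qᵐ`: words obtained from `c` by changing at most one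
coordinate by `±1 (mod q)`. -/
def RBall {q m : ℕ} (c : Fin m → ZMod q) : Set (Fin m → ZMod q) :=
  {d | d = c ∨ ∃ i, (d i = c i + 1 ∨ d i = c i - 1) ∧ ∀ j, j ≠ i → d j = c j}

/-- The word of pairwise differences `(z_{2j} - z_{2j-1})_{j=1,…,m}` of `z ∈ ℤ_q^{2m}`
(0-based: `z_{2j+1} - z_{2j}`). -/
def pairDiffZ (q m : ℕ) (z : Fin (2 * m) → ZMod q) : Fin m → ZMod q :=
  fun j => z ⟨2 * (j : ℕ) + 1, by have := j.isLt; omega⟩ -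
           z ⟨2 * (j : ℕ), by have := j.isLt; omega⟩

/-- The outer word `(z_1, (z_{2j+1} - z_{2j})_{j=1,…,m-1})` of `z ∈ ℤ_q^{2m-1}`. -/
def oddOuterZ (q m : ℕ) (z : Fin (2 * m - 1) → ZMod q) : Fin m → ZMod q :=
  fun j =>
    if h : (j : ℕ) = 0 then z ⟨0, by have := j.isLt; omega⟩
    else z ⟨2 * (j : ℕ), by have := j.isLt; omega⟩ -
         z ⟨2 * (j : ℕ) - 1, by have := j.isLt; omega⟩

set_option maxHeartbeats 1000000

section Aux
variable {q : ℕ}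

lemma zmodOne_ne_zero (hq : 2 < q) : (1 : ZMod q) ≠ 0 := by
  haveI : Fact (1 < q) := ⟨by omega⟩
  exact one_ne_zero

lemma zmodTwo_ne_zero (hq : 2 < q) : (2 : ZMod q) ≠ 0 := by
  haveI : NeZero q := ⟨by omega⟩
  intro hh
  have h2 : ((2:ℕ) : ZMod q) = 0 := by exact_mod_cast hh
  rw [ZMod.natCast_eq_zero_iff] at h2
  exact absurd (Nat.le_of_dvd (by norm_num) h2) (by omega)

lemma val_succ_eq {x y : ZMod q} (hq : 2 < q) (h : (y.val : ℤ) = (x.val : ℤ) + 1) :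
    y = x + 1 := by
  haveI : NeZero q := ⟨by omega⟩
  have h' : y.val = x.val + 1 := by exact_mod_cast h
  have : ((y.val : ℕ) : ZMod q) = ((x.val + 1 : ℕ) : ZMod q) := by rw [h']
  simpa [ZMod.natCast_val] using this

lemma term_le_Nasym {n : ℕ} (x y : Fin n → ZMod q) (i : Fin n) :
    max (((y i).val : ℤ) - ((x i).val : ℤ)) 0 ≤ NasymZ x y :=
  Finset.single_le_sum (f := fun i => max (((y i).val : ℤ) - ((x i).val : ℤ)) 0)
    (fun j _ => le_max_right _ _) (Finset.mem_univ i)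

lemma two_terms_le_Nasym {n : ℕ} (x y : Fin n → ZMod q) {i j : Fin n} (hij : i ≠ j) :
    max (((y i).val : ℤ) - ((x i).val : ℤ)) 0 + max (((y j).val : ℤ) - ((x j).val : ℤ)) 0
      ≤ NasymZ x y := by
  have h := Finset.sum_le_sum_of_subset_of_nonneg (f := fun i =>
      max (((y i).val : ℤ) - ((x i).val : ℤ)) 0)
      (Finset.subset_univ ({i, j} : Finset (Fin n)))
      (fun k _ _ => le_max_right _ _)
  rwa [Finset.sum_pair hij] at h

/-- Structure of a pair at asymmetric distance ≤ 1. -/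
lemma diff_structure {n : ℕ} (hq : 2 < q) {x y : Fin n → ZMod q} (hxy : x ≠ y)
    (h1 : NasymZ x y ≤ 1) (h2 : NasymZ y x ≤ 1) :
    (∃ i, (y i = x i + 1 ∨ x i = y i + 1) ∧ ∀ j, j ≠ i → y j = x j) ∨
    (∃ i j, i ≠ j ∧ y i = x i + 1 ∧ x j = y j + 1 ∧ ∀ l, l ≠ i → l ≠ j → y l = x l) := by
  haveI : NeZero q := ⟨by omega⟩
  have hmax1 : ∀ i, ((y i).val : ℤ) - ((x i).val : ℤ) ≤ 1 := by
    intro i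
    have h := term_le_Nasym x y i
    have h' := le_max_left (((y i).val : ℤ) - ((x i).val : ℤ)) 0
    omega
  have hmax2 : ∀ i, ((x i).val : ℤ) - ((y i).val : ℤ) ≤ 1 := by
    intro i
    have h := term_le_Nasym y x i
    have h' := le_max_left (((x i).val : ℤ) - ((y i).val : ℤ)) 0
    omega
  have hone1 : ∀ i j, i ≠ j → ((x i).val : ℤ) < (y i).val → ((x j).val : ℤ) < (y j).val →
      False := by
    intro i j hij hi hj
    have h := two_terms_le_Nasym x y hij
    have e1 : (1:ℤ) ≤ max (((y i).val : ℤ) - ((x i).val : ℤ)) 0 := le_max_of_le_left (by omega)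
    have e2 : (1:ℤ) ≤ max (((y j).val : ℤ) - ((x j).val : ℤ)) 0 := le_max_of_le_left (by omega)
    omega
  have hone2 : ∀ i j, i ≠ j → ((y i).val : ℤ) < (x i).val → ((y j).val : ℤ) < (x j).val →
      False := by
    intro i j hij hi hj
    have h := two_terms_le_Nasym y x hij
    have e1 : (1:ℤ) ≤ max (((x i).val : ℤ) - ((y i).val : ℤ)) 0 := le_max_of_le_left (by omega)
    have e2 : (1:ℤ) ≤ max (((x j).val : ℤ) - ((y j).val : ℤ)) 0 := le_max_of_le_left (by omega)
    omega
  have hzero : ∀ i, ((y i).val : ℤ) = ((x i).val : ℤ) → y i = x i := by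
    intro i hi
    exact ZMod.val_injective q (by exact_mod_cast hi)
  have hex : ∃ i, ((y i).val : ℤ) ≠ ((x i).val : ℤ) := by
    by_contra hall
    push_neg at hall
    exact hxy (funext fun i => (hzero i (hall i)).symm)
  by_cases hP : ∃ i, ((x i).val : ℤ) < (y i).val
  · obtain ⟨i, hi⟩ := hP
    have hip : y i = x i + 1 := val_succ_eq hq (by have := hmax1 i; omega)
    by_cases hM : ∃ j, ((y j).val : ℤ) < (x j).val
    · obtain ⟨j, hj⟩ := hM
      have hjm : x j = y j + 1 := val_succ_eq hq (by have := hmax2 j; omega)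
      refine Or.inr ⟨i, j, ?_, hip, hjm, ?_⟩
      · rintro rfl; omega
      · intro l hli hlj
        refine hzero l ?_
        rcases lt_trichotomy (((x l).val : ℤ)) (((y l).val : ℤ)) with h | h | h
        · exact absurd (hone1 i l (Ne.symm hli) hi h) not_false
        · omega
        · exact absurd (hone2 j l (Ne.symm hlj) hj h) not_false
    · push_neg at hM
      refine Or.inl ⟨i, Or.inl hip, fun j hji => hzero j ?_⟩
      rcases lt_trichotomy (((x j).val : ℤ)) (((y j).val : ℤ)) with h | h | h
      · exact absurd (hone1 i j (Ne.symm hji) hi h) not_false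
      · omega
      · have := hM j; omega
  · push_neg at hP
    by_cases hM : ∃ j, ((y j).val : ℤ) < (x j).val
    · obtain ⟨j, hj⟩ := hM
      have hjm : x j = y j + 1 := val_succ_eq hq (by have := hmax2 j; omega)
      refine Or.inl ⟨j, Or.inr hjm, fun l hlj => hzero l ?_⟩
      rcases lt_trichotomy (((x l).val : ℤ)) (((y l).val : ℤ)) with h | h | h
      · have := hP l; omega
      · omega
      · exact absurd (hone2 j l (Ne.symm hlj) hj h) not_false
    · push_neg at hM
      obtain ⟨i, hi⟩ := hex
      have := hP i; have := hM i; omega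

end Aux

section Geom
variable {q m : ℕ}

lemma zmodOne_ne_zero' (hq : 2 < q) : (1 : ZMod q) ≠ 0 := by
  haveI : Fact (1 < q) := ⟨by omega⟩
  exact one_ne_zero

lemma zmodTwo_ne_zero' (hq : 2 < q) : (2 : ZMod q) ≠ 0 := by
  haveI : NeZero q := ⟨by omega⟩
  intro hh
  have h2 : ((2:ℕ) : ZMod q) = 0 := by exact_mod_cast hh
  rw [ZMod.natCast_eq_zero_iff] at h2
  exact absurd (Nat.le_of_dvd (by norm_num) h2) (by omega)

variable (C' : Submodule (ZMod q) (Fin m → ZMod q))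
  (hsec : ∀ c ∈ C', ∀ c' ∈ C', c ≠ c' → Disjoint (RBall c) (RBall c'))
include hsec

lemma no_single (hq : 2 < q) {c c' : Fin m → ZMod q} (hc : c ∈ C') (hc' : c' ∈ C')
    (t : Fin m) (ht : c' t = c t + 1 ∨ c' t = c t - 1) (hoth : ∀ j, j ≠ t → c' j = c j) :
    False := by
  have hne : c ≠ c' := by
    intro h
    rcases ht with h1 | h1 <;> rw [← h] at h1
    · exact zmodOne_ne_zero' hq (by linear_combination -h1)
    · exact zmodOne_ne_zero' hq (by linear_combination h1)
  exact Set.disjoint_left.mp (hsec c hc c' hc' hne)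
    (Or.inr ⟨t, ht, hoth⟩) (Or.inl rfl)

lemma no_double_same (hq : 2 < q) {c c' : Fin m → ZMod q} (hc : c ∈ C') (hc' : c' ∈ C')
    (t : Fin m) (ht : c' t = c t + 2) (hoth : ∀ j, j ≠ t → c' j = c j) : False := by
  have hne : c ≠ c' := by
    intro h; rw [← h] at ht
    exact zmodTwo_ne_zero' hq (by linear_combination -ht)
  set w : Fin m → ZMod q := Function.update c t (c t + 1) with hw
  have hwt : w t = c t + 1 := Function.update_self t _ c
  have hwj : ∀ j, j ≠ t → w j = c j := fun j hj => Function.update_of_ne hj _ c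
  have h1 : w ∈ RBall c := Or.inr ⟨t, Or.inl hwt, hwj⟩
  have h2 : w ∈ RBall c' := by
    refine Or.inr ⟨t, Or.inr ?_, fun j hj => (hwj j hj).trans (hoth j hj).symm⟩
    rw [hwt, ht]; ring
  exact Set.disjoint_left.mp (hsec c hc c' hc' hne) h1 h2

lemma no_double_diff (hq : 2 < q) {c c' : Fin m → ZMod q} (hc : c ∈ C') (hc' : c' ∈ C')
    {t s : Fin m} (hts : t ≠ s) {a b : ZMod q} (ha : a = 1 ∨ a = -1) (hb : b = 1 ∨ b = -1)
    (ht : c' t = c t + a) (hs : c' s = c s + b)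
    (hoth : ∀ l, l ≠ t → l ≠ s → c' l = c l) : False := by
  have hne : c ≠ c' := by
    intro h; rw [← h] at ht
    rcases ha with h1 | h1 <;> rw [h1] at ht
    · exact zmodOne_ne_zero' hq (by linear_combination -ht)
    · exact zmodOne_ne_zero' hq (by linear_combination ht)
  set w : Fin m → ZMod q := Function.update c t (c t + a) with hw
  have hwt : w t = c t + a := Function.update_self t _ c
  have hwj : ∀ j, j ≠ t → w j = c j := fun j hj => Function.update_of_ne hj _ c
  have h1 : w ∈ RBall c := by
    refine Or.inr ⟨t, ?_, hwj⟩
    rcases ha with h | h <;> rw [h] at hwt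
    · exact Or.inl hwt
    · exact Or.inr (by rw [hwt]; ring)
  have h2 : w ∈ RBall c' := by
    refine Or.inr ⟨s, ?_, fun j hj => ?_⟩
    · have hws : w s = c' s - b := by rw [hwj s (Ne.symm hts), hs]; ring
      rcases hb with h | h <;> rw [h] at hws
      · exact Or.inr hws
      · exact Or.inl (by rw [hws]; ring)
    · by_cases hjt : j = t
      · subst hjt; rw [hwt, ht]
      · rw [hwj j hjt, hoth j hjt hj]
  exact Set.disjoint_left.mp (hsec c hc c' hc' hne) h1 h2

end Geom

section Core
variable {q : ℕ}

lemma core_one_code {n m : ℕ} (hq : 2 < q)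
    (C' : Submodule (ZMod q) (Fin m → ZMod q))
    (hsec : ∀ c ∈ C', ∀ c' ∈ C', c ≠ c' → Disjoint (RBall c) (RBall c'))
    (f : (Fin n → ZMod q) → (Fin m → ZMod q)) (π : Fin n → Fin m) (ε : Fin n → ZMod q)
    (hε : ∀ i, ε i = 1 ∨ ε i = -1)
    (hfib : ∀ i j, i ≠ j → π i = π j → ε i = -ε j)
    (hf : ∀ x y : Fin n → ZMod q, ∀ i a, y i = x i + a → (∀ j, j ≠ i → y j = x j) →
          f y (π i) = f x (π i) + ε i * a ∧ ∀ t, t ≠ π i → f y t = f x t)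
    {x y : Fin n → ZMod q} (hx : f x ∈ C') (hy : f y ∈ C') (hxy : x ≠ y) :
    2 ≤ DasymZ x y := by
  by_contra hcon
  push_neg at hcon
  have h1 : NasymZ x y ≤ 1 := by
    have := le_max_left (NasymZ x y) (NasymZ y x); unfold DasymZ at hcon; omega
  have h2 : NasymZ y x ≤ 1 := by
    have := le_max_right (NasymZ x y) (NasymZ y x); unfold DasymZ at hcon; omega
  rcases diff_structure hq hxy h1 h2 with ⟨i, hi, hrest⟩ | ⟨i, j, hij, hi, hj, hrest⟩
  · -- single coordinate change
    have hcase : y i = x i + 1 ∨ y i = x i + (-1) := by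
      rcases hi with h | h
      · exact Or.inl h
      · exact Or.inr (by linear_combination -h)
    rcases hcase with h | h
    · obtain ⟨hA, _⟩ := hf x y i 1 h hrest
      refine no_single C' hsec hq hx hy (π i) ?_ (fun t ht => (hf x y i 1 h hrest).2 t ht)
      rcases hε i with he | he <;> rw [he] at hA
      · exact Or.inl (by linear_combination hA)
      · exact Or.inr (by linear_combination hA)
    · obtain ⟨hA, _⟩ := hf x y i (-1) h hrest
      refine no_single C' hsec hq hx hy (π i) ?_ (fun t ht => (hf x y i (-1) h hrest).2 t ht)
      rcases hε i with he | he <;> rw [he] at hA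
      · exact Or.inr (by linear_combination hA)
      · exact Or.inl (by linear_combination hA)
  · -- two coordinate changes: +1 at i, -1 at j
    set z : Fin n → ZMod q := Function.update x i (x i + 1) with hz
    have hzi : z i = x i + 1 := Function.update_self i _ x
    have hzrest : ∀ l, l ≠ i → z l = x l := fun l hl => Function.update_of_ne hl _ x
    obtain ⟨hA1, hB1⟩ := hf x z i 1 hzi hzrest
    have hyzj : y j = z j + (-1) := by
      rw [hzrest j (Ne.symm hij)]; linear_combination -hj
    have hyzrest : ∀ l, l ≠ j → y l = z l := by
      intro l hl
      by_cases hli : l = i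
      · subst hli; rw [hzi, hi]
      · rw [hzrest l hli, hrest l hli hl]
    obtain ⟨hA2, hB2⟩ := hf z y j (-1) hyzj hyzrest
    by_cases hpp : π i = π j
    · -- same fiber: ±2 in one coordinate
      have hee : ε i = -ε j := hfib i j hij hpp
      rw [← hpp] at hA2
      have hkey : f y (π i) = f x (π i) + 2 * ε i := by
        rw [hA2, hA1]; rw [hee]; ring
      have hoth : ∀ l, l ≠ π i → f y l = f x l := by
        intro l hl
        rw [hB2 l (hpp ▸ hl), hB1 l hl]
      rcases hε i with he | he <;> rw [he] at hkey
      · exact no_double_same C' hsec hq hx hy (π i) (by linear_combination hkey) hoth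
      · refine no_double_same C' hsec hq hy hx (π i) (by linear_combination -hkey)
          (fun l hl => (hoth l hl).symm)
    · -- different fibers
      have hti : f y (π i) = f x (π i) + ε i := by
        rw [hB2 (π i) hpp, hA1]; ring
      have htj : f y (π j) = f x (π j) + (-ε j) := by
        rw [hA2, hB1 (π j) (Ne.symm hpp)]; ring
      refine no_double_diff C' hsec hq hx hy hpp (hε i) ?_ hti htj ?_
      · rcases hε j with he | he <;> rw [he]
        · exact Or.inr rfl
        · exact Or.inl (by ring)
      · intro l hl1 hl2
        rw [hB2 l hl2, hB1 l hl1]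

end Core

section Maps
variable {q : ℕ}

def pdIdx {m : ℕ} (i : Fin (2 * m)) : Fin m := ⟨(i : ℕ) / 2, by have := i.isLt; omega⟩
def pdSign (q : ℕ) {m : ℕ} (i : Fin (2 * m)) : ZMod q := if (i : ℕ) % 2 = 1 then 1 else -1

lemma pdSign_cases {m : ℕ} (i : Fin (2 * m)) : pdSign q i = 1 ∨ pdSign q i = -1 := by
  unfold pdSign; split <;> simp

lemma pdFib {m : ℕ} (i j : Fin (2 * m)) (hij : i ≠ j) (hp : pdIdx i = pdIdx j) :
    pdSign q i = -pdSign q j := by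
  have hv : (i : ℕ) / 2 = (j : ℕ) / 2 := by
    have := congrArg Fin.val hp; simpa [pdIdx] using this
  have hne : (i : ℕ) ≠ (j : ℕ) := fun h => hij (Fin.ext h)
  have hpar : (i : ℕ) % 2 ≠ (j : ℕ) % 2 := by omega
  unfold pdSign
  rcases Nat.mod_two_eq_zero_or_one (i : ℕ) with h | h <;>
    rcases Nat.mod_two_eq_zero_or_one (j : ℕ) with h' | h' <;>
      simp [h, h'] at hpar ⊢

lemma pairDiff_update {m : ℕ} (x y : Fin (2 * m) → ZMod q) (i : Fin (2 * m)) (a : ZMod q)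
    (h1 : y i = x i + a) (h2 : ∀ j, j ≠ i → y j = x j) :
    pairDiffZ q m y (pdIdx i) = pairDiffZ q m x (pdIdx i) + pdSign q i * a ∧
    ∀ t, t ≠ pdIdx i → pairDiffZ q m y t = pairDiffZ q m x t := by
  have hlt := i.isLt
  have key : ∀ (w : Fin (2 * m) → ZMod q) (t : Fin m),
      pairDiffZ q m w t = w ⟨2 * (t : ℕ) + 1, by have := t.isLt; omega⟩ -
        w ⟨2 * (t : ℕ), by have := t.isLt; omega⟩ := fun _ _ => rfl
  constructor
  · rw [key, key]
    show y ⟨2 * ((i : ℕ) / 2) + 1, by omega⟩ - y ⟨2 * ((i : ℕ) / 2), by omega⟩ =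
      x ⟨2 * ((i : ℕ) / 2) + 1, by omega⟩ - x ⟨2 * ((i : ℕ) / 2), by omega⟩ + pdSign q i * a
    by_cases hpar : (i : ℕ) % 2 = 1
    · have hie : (⟨2 * ((i : ℕ) / 2) + 1, by omega⟩ : Fin (2 * m)) = i := Fin.ext (by simp; omega)
      have hne : (⟨2 * ((i : ℕ) / 2), by omega⟩ : Fin (2 * m)) ≠ i := by
        intro h; have := congrArg Fin.val h; simp at this; omega
      rw [hie, h2 _ hne, h1, pdSign, if_pos hpar]; ring
    · have hie : (⟨2 * ((i : ℕ) / 2), by omega⟩ : Fin (2 * m)) = i := Fin.ext (by simp; omega)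
      have hne : (⟨2 * ((i : ℕ) / 2) + 1, by omega⟩ : Fin (2 * m)) ≠ i := by
        intro h; have := congrArg Fin.val h; simp at this; omega
      rw [hie, h2 _ hne, h1, pdSign, if_neg hpar]; ring
  · intro t ht
    have htv : (t : ℕ) ≠ (i : ℕ) / 2 := by
      intro h; exact ht (Fin.ext (by simpa [pdIdx] using h))
    have hlt' := t.isLt
    have hn1 : (⟨2 * (t : ℕ) + 1, by omega⟩ : Fin (2 * m)) ≠ i := by
      intro h; have := congrArg Fin.val h; simp at this; omega
    have hn2 : (⟨2 * (t : ℕ), by omega⟩ : Fin (2 * m)) ≠ i := by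
      intro h; have := congrArg Fin.val h; simp at this; omega
    rw [key, key, h2 _ hn1, h2 _ hn2]

end Maps

section Maps2
variable {q : ℕ}

def ooIdx {m : ℕ} (i : Fin (2 * m - 1)) : Fin m := ⟨((i : ℕ) + 1) / 2, by have := i.isLt; omega⟩
def ooSign (q : ℕ) {m : ℕ} (i : Fin (2 * m - 1)) : ZMod q := if (i : ℕ) % 2 = 1 then -1 else 1

lemma ooSign_cases {m : ℕ} (i : Fin (2 * m - 1)) : ooSign q i = 1 ∨ ooSign q i = -1 := by
  unfold ooSign; split <;> simp

lemma ooFib {m : ℕ} (i j : Fin (2 * m - 1)) (hij : i ≠ j) (hp : ooIdx i = ooIdx j) :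
    ooSign q i = -ooSign q j := by
  have hv : ((i : ℕ) + 1) / 2 = ((j : ℕ) + 1) / 2 := by
    have := congrArg Fin.val hp; simpa [ooIdx] using this
  have hne : (i : ℕ) ≠ (j : ℕ) := fun h => hij (Fin.ext h)
  have hpar : (i : ℕ) % 2 ≠ (j : ℕ) % 2 := by omega
  unfold ooSign
  rcases Nat.mod_two_eq_zero_or_one (i : ℕ) with h | h <;>
    rcases Nat.mod_two_eq_zero_or_one (j : ℕ) with h' | h' <;>
      simp [h, h'] at hpar ⊢

lemma oddOuter_update {m : ℕ} (x y : Fin (2 * m - 1) → ZMod q) (i : Fin (2 * m - 1)) (a : ZMod q)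
    (h1 : y i = x i + a) (h2 : ∀ j, j ≠ i → y j = x j) :
    oddOuterZ q m y (ooIdx i) = oddOuterZ q m x (ooIdx i) + ooSign q i * a ∧
    ∀ t, t ≠ ooIdx i → oddOuterZ q m y t = oddOuterZ q m x t := by
  have hlt := i.isLt
  have key0 : ∀ (w : Fin (2 * m - 1) → ZMod q) (t : Fin m), (t : ℕ) = 0 →
      oddOuterZ q m w t = w ⟨0, by have := t.isLt; omega⟩ := by
    intro w t h; simp only [oddOuterZ, dif_pos h]
  have key1 : ∀ (w : Fin (2 * m - 1) → ZMod q) (t : Fin m), (t : ℕ) ≠ 0 →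
      oddOuterZ q m w t = w ⟨2 * (t : ℕ), by have := t.isLt; omega⟩ -
        w ⟨2 * (t : ℕ) - 1, by have := t.isLt; omega⟩ := by
    intro w t h; simp only [oddOuterZ, dif_neg h]
  constructor
  · by_cases hi0 : (i : ℕ) = 0
    · have ht0 : ((ooIdx i : Fin m) : ℕ) = 0 := by show ((i:ℕ)+1)/2 = 0; omega
      obtain ⟨b0, hb0, hkey⟩ : ∃ b0 : Fin (2 * m - 1), (b0 : ℕ) = 0 ∧
          ∀ w : Fin (2 * m - 1) → ZMod q, oddOuterZ q m w (ooIdx i) = w b0 :=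
        ⟨_, rfl, fun w => key0 w _ ht0⟩
      rw [hkey y, hkey x]
      have hie : b0 = i := Fin.ext (by omega)
      rw [hie, h1, ooSign, if_neg (by omega : ¬ (i : ℕ) % 2 = 1)]
      ring
    · have ht0 : ((ooIdx i : Fin m) : ℕ) ≠ 0 := by show ¬ ((i:ℕ)+1)/2 = 0; omega
      obtain ⟨b1, b2, hb1, hb2, hkey⟩ :
          ∃ b1 b2 : Fin (2 * m - 1), (b1 : ℕ) = 2 * (((i : ℕ) + 1) / 2) ∧
            (b2 : ℕ) = 2 * (((i : ℕ) + 1) / 2) - 1 ∧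
            ∀ w : Fin (2 * m - 1) → ZMod q, oddOuterZ q m w (ooIdx i) = w b1 - w b2 :=
        ⟨_, _, rfl, rfl, fun w => key1 w _ ht0⟩
      rw [hkey y, hkey x]
      by_cases hpar : (i : ℕ) % 2 = 1
      · have hie : b2 = i := Fin.ext (by omega)
        have hne : b1 ≠ i := by intro h; have := congrArg Fin.val h; omega
        rw [hie, h2 _ hne, h1, ooSign, if_pos hpar]; ring
      · have hie : b1 = i := Fin.ext (by omega)
        have hne : b2 ≠ i := by intro h; have := congrArg Fin.val h; omega
        rw [hie, h2 _ hne, h1, ooSign, if_neg hpar]; ring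
  · intro t ht
    have htv : (t : ℕ) ≠ ((i : ℕ) + 1) / 2 := by
      intro h; exact ht (Fin.ext (by simpa [ooIdx] using h))
    have hlt' := t.isLt
    by_cases ht0 : (t : ℕ) = 0
    · obtain ⟨b0, hb0, hkey⟩ : ∃ b0 : Fin (2 * m - 1), (b0 : ℕ) = 0 ∧
          ∀ w : Fin (2 * m - 1) → ZMod q, oddOuterZ q m w t = w b0 :=
        ⟨_, rfl, fun w => key0 w _ ht0⟩
      rw [hkey y, hkey x]
      exact h2 _ (by intro h; have := congrArg Fin.val h; omega)
    · obtain ⟨b1, b2, hb1, hb2, hkey⟩ :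
          ∃ b1 b2 : Fin (2 * m - 1), (b1 : ℕ) = 2 * (t : ℕ) ∧
            (b2 : ℕ) = 2 * (t : ℕ) - 1 ∧
            ∀ w : Fin (2 * m - 1) → ZMod q, oddOuterZ q m w t = w b1 - w b2 :=
        ⟨_, _, rfl, rfl, fun w => key1 w _ ht0⟩
      rw [hkey y, hkey x]
      rw [h2 _ (by intro h; have := congrArg Fin.val h; omega),
          h2 _ (by intro h; have := congrArg Fin.val h; omega)]

end Maps2

section Lin
variable {q : ℕ}

def pairDiffL (q m : ℕ) : (Fin (2 * m) → ZMod q) →ₗ[ZMod q] (Fin m → ZMod q) where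
  toFun := pairDiffZ q m
  map_add' x y := by
    funext j
    simp only [pairDiffZ, Pi.add_apply]
    ring
  map_smul' c x := by
    funext j
    simp only [pairDiffZ, Pi.smul_apply, RingHom.id_apply, smul_eq_mul]
    ring

def oddOuterL (q m : ℕ) : (Fin (2 * m - 1) → ZMod q) →ₗ[ZMod q] (Fin m → ZMod q) where
  toFun := oddOuterZ q m
  map_add' x y := by
    funext j; simp only [oddOuterZ, Pi.add_apply]
    split <;> ring
  map_smul' c x := by
    funext j; simp only [oddOuterZ, Pi.smul_apply, RingHom.id_apply, smul_eq_mul]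
    split <;> ring

lemma pairDiffL_surj (q m : ℕ) : Function.Surjective (pairDiffL q m) := by
  intro c
  refine ⟨fun i => if (i : ℕ) % 2 = 1 then c ⟨(i : ℕ) / 2, by have := i.isLt; omega⟩ else 0, ?_⟩
  funext j
  have hj := j.isLt
  show (if (2 * (j : ℕ) + 1) % 2 = 1 then c ⟨(2 * (j : ℕ) + 1) / 2, by omega⟩ else 0) -
      (if (2 * (j : ℕ)) % 2 = 1 then c ⟨(2 * (j : ℕ)) / 2, by omega⟩ else 0) = c j
  rw [if_pos (by omega), if_neg (by omega), sub_zero]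
  congr 1
  exact Fin.ext (by simp; omega)

lemma oddOuterL_surj (q m : ℕ) : Function.Surjective (oddOuterL q m) := by
  intro c
  refine ⟨fun i => if (i : ℕ) % 2 = 1 then 0 else c ⟨((i : ℕ) + 1) / 2, by have := i.isLt; omega⟩,
    ?_⟩
  funext j
  have hj := j.isLt
  show oddOuterZ q m (fun i => if (i : ℕ) % 2 = 1 then 0 else
    c ⟨((i : ℕ) + 1) / 2, by have := i.isLt; omega⟩) j = c j
  by_cases hj0 : (j : ℕ) = 0
  · rw [show oddOuterZ q m (fun i => if (i : ℕ) % 2 = 1 then 0 else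
        c ⟨((i : ℕ) + 1) / 2, by have := i.isLt; omega⟩) j =
        (if (0 : ℕ) % 2 = 1 then 0 else c ⟨(0 + 1) / 2, by omega⟩) from by
      simp only [oddOuterZ, dif_pos hj0]]
    rw [if_neg (by omega)]
    congr 1
    exact Fin.ext (by simp; omega)
  · rw [show oddOuterZ q m (fun i => if (i : ℕ) % 2 = 1 then 0 else
        c ⟨((i : ℕ) + 1) / 2, by have := i.isLt; omega⟩) j =
        (if (2 * (j : ℕ)) % 2 = 1 then 0 else c ⟨((2 * (j : ℕ)) + 1) / 2, by omega⟩) -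
        (if (2 * (j : ℕ) - 1) % 2 = 1 then 0 else
          c ⟨((2 * (j : ℕ) - 1) + 1) / 2, by omega⟩) from by
      simp only [oddOuterZ, dif_neg hj0]]
    rw [if_neg (by omega), if_pos (by omega), sub_zero]
    congr 1
    exact Fin.ext (by simp; omega)

lemma finrank_comap_eq {n m' : ℕ} (hp : Nat.Prime q)
    (L : (Fin n → ZMod q) →ₗ[ZMod q] (Fin m' → ZMod q)) (hL : Function.Surjective L)
    (C' : Submodule (ZMod q) (Fin m' → ZMod q)) :
    Module.finrank (ZMod q) (C'.comap L) + m' = n + Module.finrank (ZMod q) C' := by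
  haveI : Fact (Nat.Prime q) := ⟨hp⟩
  set g := C'.mkQ.comp L with hg
  have hker : LinearMap.ker g = C'.comap L := by
    rw [hg, LinearMap.ker_comp, Submodule.ker_mkQ]
  have hgsurj : Function.Surjective g := (Submodule.mkQ_surjective C').comp hL
  have hrange : LinearMap.range g = ⊤ := LinearMap.range_eq_top.mpr hgsurj
  have h1 := LinearMap.finrank_range_add_finrank_ker g
  rw [hrange, hker] at h1
  have h2 := Submodule.finrank_quotient_add_finrank C'
  have h3 : Module.finrank (ZMod q) (Fin n → ZMod q) = n := by
    simp [Module.finrank_pi]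
  have h4 : Module.finrank (ZMod q) (Fin m' → ZMod q) = m' := by
    simp [Module.finrank_pi]
  have h5 : Module.finrank (ZMod q) (⊤ : Submodule (ZMod q) ((Fin m' → ZMod q) ⧸ C')) =
      Module.finrank (ZMod q) ((Fin m' → ZMod q) ⧸ C') := finrank_top _ _
  omega

end Lin

/-- Let `q > 2` be prime and `C' ⊆ ℤ_qᵐ` a `k`-dimensional linear subspace that is
single-error-correcting for `ℛ_q`. Then (i) `C = {z : pairDiffZ z ∈ C'}` is a linear
subspace of `ℤ_q^{2m}` of dimension `m+k` which is a `1`-code of length `2m`, and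
(ii) `C̃ = {z : oddOuterZ z ∈ C'}` is a linear subspace of `ℤ_q^{2m-1}` of dimension
`m+k-1` which is a `1`-code of length `2m-1`. -/
theorem concat_linear_one_code (q m k : ℕ) (hq : 2 < q) (hp : Nat.Prime q)
    (C' : Submodule (ZMod q) (Fin m → ZMod q))
    (hk : Module.finrank (ZMod q) C' = k)
    (hsec : ∀ c ∈ C', ∀ c' ∈ C', c ≠ c' → Disjoint (RBall c) (RBall c')) :
    (∃ S : Submodule (ZMod q) (Fin (2 * m) → ZMod q),
        (S : Set (Fin (2 * m) → ZMod q)) = {z | pairDiffZ q m z ∈ C'} ∧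
        Module.finrank (ZMod q) S = m + k ∧
        ∀ x ∈ S, ∀ y ∈ S, x ≠ y → 2 ≤ DasymZ x y) ∧
    (∃ T : Submodule (ZMod q) (Fin (2 * m - 1) → ZMod q),
        (T : Set (Fin (2 * m - 1) → ZMod q)) = {z | oddOuterZ q m z ∈ C'} ∧
        Module.finrank (ZMod q) T = m + k - 1 ∧
        ∀ x ∈ T, ∀ y ∈ T, x ≠ y → 2 ≤ DasymZ x y) := by
  haveI : Fact (Nat.Prime q) := ⟨hp⟩
  have hm' : Module.finrank (ZMod q) (Fin m → ZMod q) = m := by simp [Module.finrank_pi]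
  have hkm : k ≤ m := by
    have := Submodule.finrank_le C'
    omega
  constructor
  · refine ⟨C'.comap (pairDiffL q m), rfl, ?_, ?_⟩
    · have h := finrank_comap_eq hp (pairDiffL q m) (pairDiffL_surj q m) C'
      rw [hk] at h
      omega
    · intro x hx y hy hxy
      exact core_one_code hq C' hsec (pairDiffZ q m) pdIdx (pdSign q)
        pdSign_cases pdFib pairDiff_update hx hy hxy
  · refine ⟨C'.comap (oddOuterL q m), rfl, ?_, ?_⟩
    · have h := finrank_comap_eq hp (oddOuterL q m) (oddOuterL_surj q m) C'
      rw [hk] at h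
      omega
    · intro x hx y hy hxy
      exact core_one_code hq C' hsec (oddOuterZ q m) ooIdx (ooSign q)
        ooSign_cases ooFib oddOuter_update hx hy hxy
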